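/- For 1 ≤ p < n, φ_{n,p}(u) = ((n-p+1)/n)·u + (p/n)·(u²/(2-u))·[1 - u(u+1)⋯(u+p-2)/p!], where φ_{n,p} is the probability generating function of the number of moves of symbol p under Fisher-Yates on n symbols. -/

import Mathlib

/-- The number of moves of a symbol in the Fisher–Yates algorithm, defined
recursively via the triangular decomposition.  At stage `k+1` (symbols
`0,…,k+1`), `q = π⁻¹(k+1)` is the position of the last symbol and
`σ = π ∘ τ(k+1,q)` fixes `k+1`.  The final trivial swap is counted (base
case `1`). -/
def movesAux {N : ℕ} : ℕ → Equiv.Perm (Fin N) → Fin N → ℕ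
  | 0, _, _ => 1
  | k + 1, π, p =>
    if h : k + 1 < N then
      let lst : Fin N := ⟨k + 1, h⟩
      let q := π⁻¹ lst
      if p = lst then
        if q = lst then 1 else 1 + movesAux k (π * Equiv.swap lst q) q
      else if p = q then 1 else movesAux k (π * Equiv.swap lst q) p
    else 1

/-- `moves π p` is the number of moves of symbol `p` (0-based; paper's symbol
`p+1`) when the Fisher–Yates algorithm produces `π ∈ Sₙ`. -/
def moves {n : ℕ} (π : Equiv.Perm (Fin n)) (p : Fin n) : ℕ :=
  movesAux (n - 1) π p

/-- `phi n p u` is the probability generating function `φ_{n,p}(u)` of the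
number of moves of symbol `p` (1-based) under Fisher–Yates on `n` symbols,
evaluated at `u`. -/
def phi (n p : ℕ) (u : ℚ) : ℚ :=
  if h : 1 ≤ p ∧ p ≤ n then
    (∑ π : Equiv.Perm (Fin n), u ^ moves π ⟨p - 1, by omega⟩) / n.factorial
  else 0

namespace FY


def Fset (n k : ℕ) : Finset (Equiv.Perm (Fin n)) :=
  Finset.univ.filter (fun π => ∀ i : Fin n, k < i.val → π i = i)

lemma mem_Fset {n k : ℕ} {π : Equiv.Perm (Fin n)} :
    π ∈ Fset n k ↔ ∀ i : Fin n, k < i.val → π i = i := by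
  simp [Fset]

def Qset (n m : ℕ) : Finset (Fin n) := Finset.univ.filter (fun q => q.val ≤ m)

lemma mem_Qset {n m : ℕ} {q : Fin n} : q ∈ Qset n m ↔ q.val ≤ m := by simp [Qset]

noncomputable def Sn (n k : ℕ) (p : Fin n) (u : ℚ) : ℚ :=
  ∑ π ∈ Fset n k, u ^ movesAux k π p

noncomputable def Tn (n k : ℕ) (u : ℚ) : ℚ := ∑ q ∈ Qset n k, Sn n k q u

lemma Fset_zero {n : ℕ} (hn : 0 < n) : Fset n 0 = {1} := by
  ext π
  simp only [mem_Fset, Finset.mem_singleton]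
  constructor
  · intro h
    have key : ∀ i, π i = i := by
      intro i
      rcases Nat.eq_zero_or_pos i.val with h0 | h0
      · rcases Nat.eq_zero_or_pos (π i).val with h1 | h1
        · exact Fin.ext (h1.trans h0.symm)
        · exact π.injective (h (π i) h1)
      · exact h i h0
    ext i
    simp [key i]
  · rintro rfl i _
    rfl

lemma Fset_fix {n k : ℕ} {σ : Equiv.Perm (Fin n)} (hσ : σ ∈ Fset n k)
    {i : Fin n} (hi : k < i.val) : σ i = i := mem_Fset.mp hσ i hi

lemma Fset_inv_fix {n k : ℕ} {σ : Equiv.Perm (Fin n)} (hσ : σ ∈ Fset n k)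
    {i : Fin n} (hi : k < i.val) : σ⁻¹ i = i := by
  have := Fset_fix hσ hi
  exact σ.injective (by simp [this])

end FY
namespace FY

lemma inv_mem_Qset {n k : ℕ} (hk : k + 1 < n) {π : Equiv.Perm (Fin n)}
    (hπ : π ∈ Fset n (k + 1)) : (π⁻¹ ⟨k + 1, hk⟩).val ≤ k + 1 := by
  by_contra hgt
  push_neg at hgt
  have h2 : π (π⁻¹ ⟨k + 1, hk⟩) = π⁻¹ ⟨k + 1, hk⟩ := Fset_fix hπ hgt
  rw [← Equiv.Perm.mul_apply, mul_inv_cancel, Equiv.Perm.one_apply] at h2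
  rw [← h2] at hgt
  simp at hgt

lemma sum_decomp {n k : ℕ} (hk : k + 1 < n) (f : Equiv.Perm (Fin n) → ℚ) :
    ∑ π ∈ Fset n (k + 1), f π =
      ∑ q ∈ Qset n (k + 1), ∑ σ ∈ Fset n k, f (σ * Equiv.swap ⟨k + 1, hk⟩ q) := by
  classical
  rw [← Finset.sum_product']
  refine Finset.sum_nbij'
    (fun π => (π⁻¹ ⟨k + 1, hk⟩, π * Equiv.swap ⟨k + 1, hk⟩ (π⁻¹ ⟨k + 1, hk⟩)))
    (fun x => x.2 * Equiv.swap ⟨k + 1, hk⟩ x.1) ?_ ?_ ?_ ?_ ?_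
  · intro π hπ
    rw [Finset.mem_product]
    refine ⟨mem_Qset.mpr (inv_mem_Qset hk hπ), ?_⟩
    rw [mem_Fset]
    intro i hi
    by_cases hil : i = ⟨k + 1, hk⟩
    · subst hil
      simp only [Equiv.Perm.mul_apply, Equiv.swap_apply_left]
      simp
    · have hi' : k + 1 < i.val := by
        rcases Nat.lt_or_ge (k + 1) i.val with h | h
        · exact h
        · exact absurd (Fin.ext (show i.val = k + 1 by omega) : i = ⟨k + 1, hk⟩) hil
      have hq : i ≠ π⁻¹ ⟨k + 1, hk⟩ := by
        intro h
        rw [h] at hi'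
        exact absurd (inv_mem_Qset hk hπ) (by omega)
      simp only [Equiv.Perm.mul_apply, Equiv.swap_apply_of_ne_of_ne hil hq]
      exact Fset_fix hπ hi'
  · intro x hx
    rw [Finset.mem_product] at hx
    rw [mem_Fset]
    intro i hi
    have hil : i ≠ ⟨k + 1, hk⟩ := by
      intro h
      have : i.val = k + 1 := by rw [h]
      omega
    have hiq : i ≠ x.1 := by
      intro h
      have := mem_Qset.mp hx.1
      rw [h] at hi
      omega
    simp only [Equiv.Perm.mul_apply, Equiv.swap_apply_of_ne_of_ne hil hiq]
    exact Fset_fix hx.2 (by omega)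
  · intro π hπ
    simp [mul_assoc]
  · intro x hx
    rw [Finset.mem_product] at hx
    have hfix : x.2⁻¹ ⟨k + 1, hk⟩ = ⟨k + 1, hk⟩ := Fset_inv_fix hx.2 (by simp)
    have h1 : (x.2 * Equiv.swap ⟨k + 1, hk⟩ x.1)⁻¹ ⟨k + 1, hk⟩ = x.1 := by
      rw [mul_inv_rev]
      rw [Equiv.Perm.mul_apply, hfix]; simp
    have h2 : (x.2 * Equiv.swap ⟨k + 1, hk⟩ x.1) *
        Equiv.swap ⟨k + 1, hk⟩ ((x.2 * Equiv.swap ⟨k + 1, hk⟩ x.1)⁻¹ ⟨k + 1, hk⟩) = x.2 := by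
      rw [h1, mul_assoc, Equiv.swap_mul_self, mul_one]
    exact Prod.ext h1 h2
  · intro π hπ
    simp [mul_assoc]

end FY
namespace FY

lemma movesAux_eval {n k : ℕ} (hk : k + 1 < n) {σ : Equiv.Perm (Fin n)}
    (hσ : σ ∈ Fset n k) {q : Fin n} (hq : q.val ≤ k + 1) (p : Fin n) :
    movesAux (k + 1) (σ * Equiv.swap ⟨k + 1, hk⟩ q) p =
      if p = ⟨k + 1, hk⟩ then
        (if q = ⟨k + 1, hk⟩ then 1 else 1 + movesAux k σ q)
      else if p = q then 1 else movesAux k σ p := by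
  have hfix : σ⁻¹ ⟨k + 1, hk⟩ = ⟨k + 1, hk⟩ := Fset_inv_fix hσ (by simp)
  have hinv : (σ * Equiv.swap ⟨k + 1, hk⟩ q)⁻¹ ⟨k + 1, hk⟩ = q := by
    rw [mul_inv_rev]
    rw [Equiv.Perm.mul_apply, hfix]; simp
  have hcanc : (σ * Equiv.swap ⟨k + 1, hk⟩ q) * Equiv.swap ⟨k + 1, hk⟩ q = σ := by
    rw [mul_assoc, Equiv.swap_mul_self, mul_one]
  rw [movesAux]
  rw [dif_pos hk]
  simp only [hinv, hcanc]

lemma card_Qset {n m : ℕ} (hm : m < n) : (Qset n m).card = m + 1 := by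
  classical
  have himg : Qset n m = Finset.image (fun i : Fin (m + 1) => Fin.castLE hm i) Finset.univ := by
    ext q
    simp only [mem_Qset, Finset.mem_image, Finset.mem_univ, true_and]
    constructor
    · intro h
      exact ⟨⟨q.val, by omega⟩, by apply Fin.ext; rfl⟩
    · rintro ⟨i, rfl⟩
      exact Nat.lt_succ_iff.mp i.isLt
  rw [himg, Finset.card_image_of_injective _ (Fin.castLE_injective _), Finset.card_univ,
    Fintype.card_fin]

lemma card_Fset {n : ℕ} : ∀ k, k < n → (Fset n k).card = (k + 1).factorial := by
  intro k
  induction k with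
  | zero => intro h; rw [Fset_zero h]; simp
  | succ k ih =>
    intro hk
    have hcast : ((Fset n (k + 1)).card : ℚ) = ((k + 2).factorial : ℚ) := by
      have h1 : ∑ π ∈ Fset n (k + 1), (1 : ℚ) =
          ∑ q ∈ Qset n (k + 1), ∑ σ ∈ Fset n k, (1 : ℚ) := sum_decomp hk (fun _ => 1)
      simp only [Finset.sum_const, nsmul_eq_mul, mul_one] at h1
      rw [h1, card_Qset hk, ih (by omega)]
      push_cast [Nat.factorial_succ]
      ring
    exact_mod_cast hcast

lemma Qset_erase {n k : ℕ} (hk : k + 1 < n) :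
    (Qset n (k + 1)).erase ⟨k + 1, hk⟩ = Qset n k := by
  ext q
  simp only [Finset.mem_erase, mem_Qset]
  constructor
  · rintro ⟨hne, hle⟩
    rcases Nat.lt_or_ge q.val (k + 1) with h | h
    · omega
    · exact absurd (Fin.ext (show q.val = k + 1 by omega) : q = ⟨k + 1, hk⟩) hne
  · intro h
    refine ⟨?_, by omega⟩
    intro he
    have : q.val = k + 1 := by rw [he]
    omega

lemma Sn_rec_off {n k : ℕ} (hk : k + 1 < n) {p : Fin n} (hp : p.val ≤ k) (u : ℚ) :
    Sn n (k + 1) p u = (k + 1).factorial * u + (k + 1) * Sn n k p u := by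
  have hlast : p ≠ ⟨k + 1, hk⟩ := by
    intro h
    have : p.val = k + 1 := by rw [h]
    omega
  unfold Sn
  rw [sum_decomp hk]
  have hterm : ∀ q ∈ Qset n (k + 1), ∀ σ ∈ Fset n k,
      u ^ movesAux (k + 1) (σ * Equiv.swap ⟨k + 1, hk⟩ q) p =
        if q = p then u else u ^ movesAux k σ p := by
    intro q hq σ hσ
    rw [movesAux_eval hk hσ (mem_Qset.mp hq) p, if_neg hlast]
    by_cases h : p = q
    · rw [if_pos h, if_pos h.symm, pow_one]
    · rw [if_neg h, if_neg (Ne.symm h)]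
  calc ∑ q ∈ Qset n (k + 1), ∑ σ ∈ Fset n k,
        u ^ movesAux (k + 1) (σ * Equiv.swap ⟨k + 1, hk⟩ q) p
      = ∑ q ∈ Qset n (k + 1), ∑ σ ∈ Fset n k, (if q = p then u else u ^ movesAux k σ p) := by
        exact Finset.sum_congr rfl fun q hq => Finset.sum_congr rfl fun σ hσ => hterm q hq σ hσ
    _ = ∑ q ∈ Qset n (k + 1),
          (if q = p then ((k + 1).factorial : ℚ) * u else ∑ σ ∈ Fset n k, u ^ movesAux k σ p) := by
        refine Finset.sum_congr rfl fun q hq => ?_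
        by_cases h : q = p
        · rw [if_pos h]
          simp only [if_pos h, Finset.sum_const, nsmul_eq_mul]
          rw [card_Fset k (by omega)]
        · simp only [if_neg h]
    _ = (k + 1).factorial * u + (k + 1) * Sn n k p u := by
        have hpmem : p ∈ Qset n (k + 1) := mem_Qset.mpr (by omega)
        rw [← Finset.add_sum_erase _ _ hpmem, if_pos rfl]
        congr 1
        rw [Finset.sum_congr rfl (fun q hq => if_neg (Finset.ne_of_mem_erase hq))]
        rw [Finset.sum_const, Finset.card_erase_of_mem hpmem, card_Qset hk]
        show (↑(k + 1 + 1 - 1) : ℕ) • (∑ σ ∈ Fset n k, u ^ movesAux k σ p) = _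
        rw [Nat.add_sub_cancel, nsmul_eq_mul]
        push_cast
        rfl

lemma Sn_rec_diag {n k : ℕ} (hk : k + 1 < n) (u : ℚ) :
    Sn n (k + 1) ⟨k + 1, hk⟩ u = (k + 1).factorial * u + u * Tn n k u := by
  unfold Sn
  rw [sum_decomp hk]
  have hmem : (⟨k + 1, hk⟩ : Fin n) ∈ Qset n (k + 1) := mem_Qset.mpr (le_refl _)
  rw [← Finset.add_sum_erase _ _ hmem]
  congr 1
  · calc ∑ σ ∈ Fset n k,
          u ^ movesAux (k + 1) (σ * Equiv.swap ⟨k + 1, hk⟩ ⟨k + 1, hk⟩) ⟨k + 1, hk⟩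
        = ∑ σ ∈ Fset n k, u := by
          refine Finset.sum_congr rfl fun σ hσ => ?_
          rw [movesAux_eval hk hσ (show ((⟨k + 1, hk⟩ : Fin n)).val ≤ k + 1 from le_refl _) _,
            if_pos rfl, if_pos rfl, pow_one]
      _ = (k + 1).factorial * u := by
          rw [Finset.sum_const, card_Fset k (by omega), nsmul_eq_mul]
  · rw [Qset_erase hk]
    unfold Tn Sn
    rw [Finset.mul_sum]
    refine Finset.sum_congr rfl fun q hq => ?_
    have hq' : q.val ≤ k := mem_Qset.mp hq
    have hql : q ≠ ⟨k + 1, hk⟩ := by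
      intro h
      have : q.val = k + 1 := by rw [h]
      omega
    calc ∑ σ ∈ Fset n k, u ^ movesAux (k + 1) (σ * Equiv.swap ⟨k + 1, hk⟩ q) ⟨k + 1, hk⟩
        = ∑ σ ∈ Fset n k, u * u ^ movesAux k σ q := by
          refine Finset.sum_congr rfl fun σ hσ => ?_
          rw [movesAux_eval hk hσ (show q.val ≤ k + 1 by omega) _,
            if_pos rfl, if_neg hql, pow_add, pow_one]
      _ = u * ∑ σ ∈ Fset n k, u ^ movesAux k σ q := by rw [Finset.mul_sum]

end FY
namespace FY

lemma Sn_zero {n : ℕ} (hn : 0 < n) (p : Fin n) (u : ℚ) : Sn n 0 p u = u := by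
  unfold Sn
  rw [Fset_zero hn]
  simp [movesAux]

lemma Tn_zero {n : ℕ} (hn : 0 < n) (u : ℚ) : Tn n 0 u = u := by
  unfold Tn
  rw [Finset.sum_congr rfl (fun q _ => Sn_zero hn q u), Finset.sum_const, card_Qset hn,
    one_nsmul]

lemma DT {n : ℕ} (u : ℚ) : ∀ k, (hk : k < n) →
    (2 - u) * Sn n k ⟨k, hk⟩ u
        = (2 - u) * k.factorial * u + (k + 1).factorial * u ^ 2
          - u ^ 2 * ∏ j ∈ Finset.range k, (u + j)
    ∧ (2 - u) * Tn n k u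
        = u * ((k + 2).factorial - ∏ j ∈ Finset.range (k + 1), (u + j)) := by
  intro k
  induction k with
  | zero =>
    intro hk
    rw [Sn_zero hk _ u, Tn_zero hk u]
    constructor
    · norm_num
    · norm_num [Nat.factorial]
      ring
  | succ k ih =>
    intro hk
    obtain ⟨ih1, ih2⟩ := ih (by omega)
    have hD : (2 - u) * Sn n (k + 1) ⟨k + 1, hk⟩ u
        = (2 - u) * (k + 1).factorial * u + (k + 2).factorial * u ^ 2
          - u ^ 2 * ∏ j ∈ Finset.range (k + 1), (u + j) := by
      rw [Sn_rec_diag hk u]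
      linear_combination u * ih2
    refine ⟨hD, ?_⟩
    -- T recursion
    have hT : Tn n (k + 1) u
        = Sn n (k + 1) ⟨k + 1, hk⟩ u + (k + 1) * ((k + 1).factorial * u)
          + (k + 1) * Tn n k u := by
      unfold Tn
      rw [← Finset.add_sum_erase _ _ (mem_Qset.mpr (le_refl _) :
        (⟨k + 1, hk⟩ : Fin n) ∈ Qset n (k + 1)), Qset_erase hk]
      rw [Finset.sum_congr rfl (fun q hq => Sn_rec_off hk (mem_Qset.mp hq) u)]
      rw [Finset.sum_add_distrib, Finset.sum_const, card_Qset (by omega), nsmul_eq_mul,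
        ← Finset.mul_sum]
      push_cast
      ring
    have hfac2 : ((k + 2).factorial : ℚ) = (k + 2) * (k + 1).factorial := by
      rw [Nat.factorial_succ]; push_cast; ring
    have hfac3 : ((k + 1 + 2).factorial : ℚ) = (k + 3) * (k + 2) * (k + 1).factorial := by
      rw [show k + 1 + 2 = (k + 2) + 1 by ring, Nat.factorial_succ, Nat.factorial_succ]
      push_cast
      ring
    have hprod : (∏ j ∈ Finset.range (k + 1 + 1), (u + j))
        = (∏ j ∈ Finset.range (k + 1), (u + j)) * (u + (k + 1)) := by
      rw [Finset.prod_range_succ]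
      push_cast
      ring
    rw [hT, hfac3, hprod]
    rw [hfac2] at ih2 hD
    linear_combination hD + ((k : ℚ) + 1) * ih2

end FY
namespace FY

lemma Sn_unroll {n : ℕ} (u : ℚ) (p0 : ℕ) (hp0 : p0 < n) : ∀ k, p0 ≤ k → k < n →
    (p0.factorial : ℚ) * Sn n k ⟨p0, hp0⟩ u
      = k.factorial * Sn n p0 ⟨p0, hp0⟩ u + (k - p0 : ℕ) * k.factorial * p0.factorial * u := by
  intro k
  induction k with
  | zero =>
    intro h _
    have hz : p0 = 0 := by omega
    subst hz
    simp
  | succ k ih =>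
    intro h hk
    rcases Nat.eq_or_lt_of_le h with he | hlt
    · subst he
      simp
    · have hp : p0 ≤ k := by omega
      have ih' := ih hp (by omega)
      rw [Nat.cast_sub hp] at ih'
      rw [Sn_rec_off hk (show ((⟨p0, hp0⟩ : Fin n)).val ≤ k from hp) u]
      rw [show ((k + 1).factorial : ℚ) = ((k : ℚ) + 1) * k.factorial by
        rw [Nat.factorial_succ]; push_cast; ring]
      rw [Nat.cast_sub (show p0 ≤ k + 1 by omega)]
      push_cast
      linear_combination ((k : ℚ) + 1) * ih'

end FY

/-- Explicit formula
`φ_{n,p}(u) = ((n-p+1)/n)·u + (p/n)·(u²/(2-u))·[1 - u(u+1)⋯(u+p-2)/p!]`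
for `1 ≤ p < n`, as an identity of rational functions (for every `u ≠ 2`). -/
theorem phi_np_explicit (n p : ℕ) (h1 : 1 ≤ p) (h2 : p < n) (u : ℚ) (hu : u ≠ 2) :
    phi n p u = (((n : ℚ) - p + 1) / n) * u +
      ((p : ℚ) / n) * (u ^ 2 / (2 - u)) *
        (1 - (∏ j ∈ Finset.range (p - 1), (u + j)) / p.factorial) := by
  have hn : 0 < n := by omega
  have hp0 : p - 1 < n := by omega
  have h2u : (2 : ℚ) - u ≠ 0 := sub_ne_zero.mpr (Ne.symm hu)
  have hnQ : (n : ℚ) ≠ 0 := Nat.cast_ne_zero.mpr (by omega)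
  have hpQ : (p : ℚ) ≠ 0 := Nat.cast_ne_zero.mpr (by omega)
  have hfp : ((p - 1).factorial : ℚ) ≠ 0 := Nat.cast_ne_zero.mpr (Nat.factorial_ne_zero _)
  have hfn : ((n - 1).factorial : ℚ) ≠ 0 := Nat.cast_ne_zero.mpr (Nat.factorial_ne_zero _)
  have hFtop : FY.Fset n (n - 1) = Finset.univ := by
    ext π
    simp only [FY.mem_Fset, Finset.mem_univ, iff_true]
    intro i hi
    exfalso
    have := i.isLt
    omega
  have hphi : phi n p u = FY.Sn n (n - 1) ⟨p - 1, hp0⟩ u / n.factorial := by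
    rw [phi, dif_pos ⟨h1, le_of_lt h2⟩]
    congr 1
    rw [FY.Sn, hFtop]
    exact Finset.sum_congr rfl fun _ _ => rfl
  obtain ⟨hDT, -⟩ := FY.DT u (p - 1) hp0
  rw [show p - 1 + 1 = p by omega] at hDT
  have hun := FY.Sn_unroll u (p - 1) hp0 (n - 1) (by omega) (by omega)
  rw [show n - 1 - (p - 1) = n - p by omega, Nat.cast_sub (le_of_lt h2)] at hun
  have hnf : (n.factorial : ℚ) = n * (n - 1).factorial := by
    rw [← Nat.mul_factorial_pred hn.ne']; push_cast; ring
  have hpf : (p.factorial : ℚ) = p * (p - 1).factorial := by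
    rw [← Nat.mul_factorial_pred (by omega : p ≠ 0)]; push_cast; ring
  have hd : FY.Sn n (p - 1) ⟨p - 1, hp0⟩ u
      = ((2 - u) * ((p - 1).factorial : ℚ) * u + (p.factorial : ℚ) * u ^ 2
          - u ^ 2 * ∏ j ∈ Finset.range (p - 1), (u + j)) / (2 - u) := by
    rw [eq_div_iff h2u]
    linear_combination hDT
  have hs : FY.Sn n (n - 1) ⟨p - 1, hp0⟩ u
      = (((n - 1).factorial : ℚ) * FY.Sn n (p - 1) ⟨p - 1, hp0⟩ u
          + ((n : ℚ) - p) * ((n - 1).factorial : ℚ) * ((p - 1).factorial : ℚ) * u)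
          / ((p - 1).factorial : ℚ) := by
    rw [eq_div_iff hfp]
    linear_combination hun
  rw [hphi, hs, hd, hnf, hpf]
  field_simp
  ring
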